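/- Weighted summation lemma: let (a_k)_{k≥0}, (b_k)_{k≥0} be nonnegative real sequences, let (c_k)_{k≥0} satisfy 0 ≤ c_{k+1} ≤ c_k ≤ 1 for all k, and let r ∈ (0,1). If a_{k+1} ≤ r·a_k + b_k for all k ≥ 0, then for every positive integer K, ∑_{k=0}^K c_k·a_k ≤ (1/(1−r))·( c_0·a_0 + ∑_{k=0}^K c_k·b_k ). -/

import Mathlib

/-- **Weighted summation lemma.** If `a_{k+1} ≤ r·a_k + b_k` with `a, b ≥ 0`,
`0 ≤ c_{k+1} ≤ c_k ≤ 1` and `r ∈ (0,1)`, then for every positive integer `K`,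
`∑_{k=0}^K c_k a_k ≤ (1/(1−r))·(c_0 a_0 + ∑_{k=0}^K c_k b_k)`. -/
theorem weighted_summation_lemma (a b c : ℕ → ℝ) (r : ℝ)
    (ha : ∀ k, 0 ≤ a k) (hb : ∀ k, 0 ≤ b k)
    (hc_nonneg : ∀ k, 0 ≤ c (k + 1)) (hc_mono : ∀ k, c (k + 1) ≤ c k)
    (hc_le : ∀ k, c k ≤ 1)
    (hr0 : 0 < r) (hr1 : r < 1)
    (hrec : ∀ k, a (k + 1) ≤ r * a k + b k)
    (K : ℕ) (hK : 1 ≤ K) :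
    ∑ k ∈ Finset.range (K + 1), c k * a k
      ≤ (1 / (1 - r)) * (c 0 * a 0 + ∑ k ∈ Finset.range (K + 1), c k * b k) := by
  have hc0 : ∀ k, 0 ≤ c k := by
    intro k
    cases k with
    | zero => exact le_trans (hc_nonneg 0) (hc_mono 0)
    | succ n => exact hc_nonneg n
  set S := ∑ k ∈ Finset.range (K + 1), c k * a k with hS
  set B := ∑ k ∈ Finset.range (K + 1), c k * b k with hB
  have hBnn : ∀ k ∈ Finset.range (K + 1), 0 ≤ c k * b k := fun k _ =>
    mul_nonneg (hc0 k) (hb k)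
  have hSnn : ∀ k ∈ Finset.range (K + 1), 0 ≤ c k * a k := fun k _ =>
    mul_nonneg (hc0 k) (ha k)
  have key : S ≤ c 0 * a 0 + (r * S + B) := by
    have h1 : S = (∑ i ∈ Finset.range K, c (i + 1) * a (i + 1)) + c 0 * a 0 :=
      Finset.sum_range_succ' _ K
    have h2 : ∀ i ∈ Finset.range K,
        c (i + 1) * a (i + 1) ≤ r * (c i * a i) + c i * b i := by
      intro i _
      have := mul_le_mul_of_nonneg_left (hrec i) (hc_nonneg i)
      calc c (i + 1) * a (i + 1) ≤ c (i + 1) * (r * a i + b i) := this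
        _ ≤ c i * (r * a i + b i) := by
            apply mul_le_mul_of_nonneg_right (hc_mono i)
            exact add_nonneg (mul_nonneg hr0.le (ha i)) (hb i)
        _ = r * (c i * a i) + c i * b i := by ring
    have h3 : (∑ i ∈ Finset.range K, c (i + 1) * a (i + 1))
        ≤ ∑ i ∈ Finset.range K, (r * (c i * a i) + c i * b i) :=
      Finset.sum_le_sum h2
    have h4 : ∑ i ∈ Finset.range K, (r * (c i * a i) + c i * b i)
        = r * (∑ i ∈ Finset.range K, c i * a i) + ∑ i ∈ Finset.range K, c i * b i := by
      rw [Finset.sum_add_distrib, Finset.mul_sum]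
    have hsub : Finset.range K ⊆ Finset.range (K + 1) :=
      Finset.range_subset_range.mpr (Nat.le_succ K)
    have h5 : (∑ i ∈ Finset.range K, c i * a i) ≤ S :=
      Finset.sum_le_sum_of_subset_of_nonneg hsub (fun k hk _ => hSnn k hk)
    have h6 : (∑ i ∈ Finset.range K, c i * b i) ≤ B :=
      Finset.sum_le_sum_of_subset_of_nonneg hsub (fun k hk _ => hBnn k hk)
    nlinarith [h1, h3, h4, h5, h6]
  have h1r : 0 < 1 - r := by linarith
  rw [div_mul_eq_mul_div, le_div_iff₀ h1r]
  nlinarith [key]
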